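/- Let g(n) denote the parity of the number of 1's in the negabinary representation of n. Then there is no n with g(n) = g(n+1) = g(n+2), i.e., the sequence G contains no three consecutive equal terms. -/

import Mathlib

/-- Digits of the negabinary (base -2) representation, least significant first. -/
def negaDigits (n : ℤ) : List ℕ :=
  if n = 0 then [] else (n % 2).toNat :: negaDigits ((n % 2 - n) / 2)
termination_by 2 * n.natAbs + (if n < 0 then 1 else 0)
decreasing_by split_ifs <;> omega

/-- Parity of the number of 1's in the negabinary representation of n. -/
def g (n : ℕ) : ℕ := (negaDigits n).sum % 2

/-- The digit at position i in the negabinary representation. -/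
def negaDigit (n : ℤ) (i : ℕ) : ℕ := (negaDigits n).getD i 0

/-- Number of runs (maximal blocks) of 1's in the binary representation of n. -/
def runsOfOnes (n : ℕ) : ℕ :=
  ((Finset.range (n + 1)).filter (fun i => n.testBit i ∧ ¬ n.testBit (i + 1))).card

/-- Parity of the number of runs of 1's in the binary representation of n. -/
def r (n : ℕ) : ℕ := runsOfOnes n % 2

lemma nega_even (m : ℤ) : (negaDigits (2 * m)).sum = (negaDigits (-m)).sum := by
  rcases eq_or_ne m 0 with rfl | hm
  · norm_num
  · rw [negaDigits]
    have h1 : (2 * m) % 2 = 0 := by omega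
    rw [if_neg (by omega), h1]
    norm_num
    rw [show -(2 * m) / 2 = -m by omega]

lemma nega_odd (m : ℤ) : (negaDigits (2 * m + 1)).sum = 1 + (negaDigits (-m)).sum := by
  rw [negaDigits]
  have h1 : (2 * m + 1) % 2 = 1 := by omega
  rw [if_neg (by omega), h1]
  have h2 : ((1 : ℤ) - (2 * m + 1)) / 2 = -m := by omega
  rw [h2]
  simp

lemma key (m : ℕ) : g (2 * m) ≠ g (2 * m + 1) := by
  unfold g
  push_cast
  rw [nega_even, nega_odd]
  omega

theorem stmt11 : ¬ ∃ n : ℕ, g n = g (n + 1) ∧ g (n + 1) = g (n + 2) := by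
  rintro ⟨n, h1, h2⟩
  rcases Nat.even_or_odd n with ⟨m, hm⟩ | ⟨m, hm⟩
  · have e : 2 * m = n := by omega
    exact key m (by rw [e]; exact h1)
  · have e : 2 * (m + 1) = n + 1 := by omega
    exact key (m + 1) (by rw [e]; exact h2)
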